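/- For every integer r ≥ 3 and every ε > 0 there exists N such that for all n ≥ N the expected number of weakly stable cyclic matchings satisfies E[S_{n,r}] ≥ (c_r − ε)·((n·log n)/2)^{r−1}, where c_r is the (r−1)-dimensional Lebesgue volume of {y ∈ [0,1]^{r−1} : 1 ≤ y_1 + ⋯ + y_{r−1} ≤ 2} (equivalently, c_r = P(Y_1 + ⋯ + Y_{r−1} ∈ [1,2]) for independent [0,1]-uniform random variables Y_1, …, Y_{r−1}). -/

import Mathlib

open MeasureTheory Set

noncomputable section

/-- Sample space for the cyclic model: `ω s i j = X^{(s)}_{i,j}`,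
the score that agent `i` on side `s` gives to agent `j` on side `s+1`. -/
abbrev CycSpace (r n : ℕ) := Fin r → Fin n → Fin n → ℝ

/-- The distribution of the scores: all `r·n²` entries i.i.d. uniform on `[0,1]`. -/
def cycMeasure (r n : ℕ) : Measure (CycSpace r n) :=
  Measure.pi fun _ : Fin r => Measure.pi fun _ : Fin n => Measure.pi fun _ : Fin n =>
    volume.restrict (Icc (0:ℝ) 1)

/-- A tuple `a : Fin r → Fin n` blocks the cyclic matching given by the permutations
`σ : Fin r → Equiv.Perm (Fin n)` (matching `σ s i` on side `s` to `σ (s+1) i` on side `s+1`,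
so the matched successor of agent `b` on side `s` is `σ (s+1) ((σ s)⁻¹ b)`):
every `a s` strictly prefers `a (s+1)` to its matched successor. -/
def cycBlocks {r n : ℕ} (hr : 0 < r) (ω : CycSpace r n)
    (σ : Fin r → Equiv.Perm (Fin n)) (a : Fin r → Fin n) : Prop :=
  haveI : NeZero r := ⟨hr.ne'⟩
  ∀ s : Fin r, ω s (a s) (a (s + 1)) < ω s (a s) (σ (s + 1) ((σ s)⁻¹ (a s)))

/-- The cyclic matching given by `σ` is weakly stable: no tuple blocks it. -/
def cycWeaklyStable {r n : ℕ} (hr : 0 < r) (ω : CycSpace r n)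
    (σ : Fin r → Equiv.Perm (Fin n)) : Prop :=
  ∀ a : Fin r → Fin n, ¬ cycBlocks hr ω σ a

/-- `S_{n,r}`: the number of weakly stable cyclic matchings, parametrized by
`(r−1)`-tuples of permutations, i.e. tuples `σ` with `σ 0` the identity. -/
def Scyc (r n : ℕ) (hr : 0 < r) (ω : CycSpace r n) : ℕ :=
  Nat.card {σ : Fin r → Equiv.Perm (Fin n) //
    σ ⟨0, hr⟩ = 1 ∧ cycWeaklyStable hr ω σ}

/-- `E[S_{n,r}]`: the expected number of weakly stable cyclic matchings. -/
def EScyc (r n : ℕ) (hr : 0 < r) : ℝ :=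
  ∫ ω, (Scyc r n hr ω : ℝ) ∂ cycMeasure r n

/-- `c_r`: the Lebesgue volume of `{y ∈ [0,1]^{r−1} : 1 ≤ y_1 + ⋯ + y_{r−1} ≤ 2}`. -/
def cConst (r : ℕ) : ℝ :=
  (volume {y : Fin (r - 1) → ℝ |
    (∀ i, y i ∈ Icc (0:ℝ) 1) ∧ (∑ i, y i) ∈ Icc (1:ℝ) 2}).toReal

instance : IsProbabilityMeasure ((volume : Measure ℝ).restrict (Icc (0:ℝ) 1)) :=
  ⟨by simp [Real.volume_Icc]⟩

instance (n : ℕ) :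
    SigmaFinite (Measure.pi fun _ : Fin n => (volume : Measure ℝ).restrict (Icc (0:ℝ) 1)) :=
  inferInstance

instance (m n : ℕ) :
    SigmaFinite (Measure.pi fun _ : Fin m =>
      Measure.pi fun _ : Fin n => (volume : Measure ℝ).restrict (Icc (0:ℝ) 1)) :=
  inferInstance

instance (n : ℕ) :
    IsProbabilityMeasure
      (Measure.pi fun _ : Fin n => Measure.pi fun _ : Fin n =>
        (volume : Measure ℝ).restrict (Icc (0:ℝ) 1)) :=
  inferInstance

instance (r n : ℕ) : IsProbabilityMeasure (cycMeasure r n) := by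
  unfold cycMeasure; infer_instance

def cycCell {r : ℕ} (hr : 0 < r) (n : ℕ) (c : Equiv.Perm (Fin n))
    (s : Fin r) (i j : Fin n) : Set ℝ :=
  if s = ⟨0, hr⟩ then (if j = c i then Iio ((n:ℝ)⁻¹) else Ioi ((n:ℝ)⁻¹)) else univ

def myF {r n : ℕ} (hr : 0 < r) (c : Equiv.Perm (Fin n)) : Set (CycSpace r n) :=
  Set.pi univ fun s => Set.pi univ fun i => Set.pi univ fun j => cycCell hr n c s i j

lemma measure_myF {r n : ℕ} (hr : 0 < r) (hn : 1 ≤ n) (c : Equiv.Perm (Fin n)) :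
    cycMeasure r n (myF hr c) =
      (ENNReal.ofReal ((n:ℝ)⁻¹) * ENNReal.ofReal (1 - (n:ℝ)⁻¹) ^ (n - 1)) ^ n := by
  classical
  have hinv1 : (n:ℝ)⁻¹ ≤ 1 := by
    rw [inv_le_one_iff₀]; right; exact_mod_cast hn
  have hinv0 : (0:ℝ) < (n:ℝ)⁻¹ := by
    have : (0:ℝ) < n := by exact_mod_cast hn
    positivity
  have hIio : (volume.restrict (Icc (0:ℝ) 1)) (Iio ((n:ℝ)⁻¹)) = ENNReal.ofReal ((n:ℝ)⁻¹) := by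
    rw [Measure.restrict_apply measurableSet_Iio]
    have : Iio ((n:ℝ)⁻¹) ∩ Icc (0:ℝ) 1 = Ico (0:ℝ) ((n:ℝ)⁻¹) := by
      ext x; simp only [mem_inter_iff, mem_Iio, mem_Icc, mem_Ico]
      constructor
      · rintro ⟨h1, h2, h3⟩; exact ⟨h2, h1⟩
      · rintro ⟨h1, h2⟩; exact ⟨h2, h1, le_trans h2.le hinv1⟩
    rw [this, Real.volume_Ico]; norm_num
  have hIoi : (volume.restrict (Icc (0:ℝ) 1)) (Ioi ((n:ℝ)⁻¹)) = ENNReal.ofReal (1 - (n:ℝ)⁻¹) := by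
    rw [Measure.restrict_apply measurableSet_Ioi]
    have : Ioi ((n:ℝ)⁻¹) ∩ Icc (0:ℝ) 1 = Ioc ((n:ℝ)⁻¹) 1 := by
      ext x; simp only [mem_inter_iff, mem_Ioi, mem_Icc, mem_Ioc]
      constructor
      · rintro ⟨h1, h2, h3⟩; exact ⟨h1, h3⟩
      · rintro ⟨h1, h2⟩; exact ⟨h1, le_trans hinv0.le h1.le, h2⟩
    rw [this, Real.volume_Ioc]
  rw [myF, cycMeasure, Measure.pi_pi]
  have hrow : ∀ i : Fin n,
      (Measure.pi fun _ : Fin n => volume.restrict (Icc (0:ℝ) 1))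
        (Set.pi univ fun j => cycCell hr n c ⟨0, hr⟩ i j) =
      ENNReal.ofReal ((n:ℝ)⁻¹) * ENNReal.ofReal (1 - (n:ℝ)⁻¹) ^ (n - 1) := by
    intro i
    rw [Measure.pi_pi]
    have hval : ∀ j, (volume.restrict (Icc (0:ℝ) 1)) (cycCell hr n c ⟨0, hr⟩ i j)
        = if j = c i then ENNReal.ofReal ((n:ℝ)⁻¹) else ENNReal.ofReal (1 - (n:ℝ)⁻¹) := by
      intro j
      rw [cycCell, if_pos rfl]
      split_ifs with h
      · exact hIio
      · exact hIoi
    simp only [hval]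
    rw [← Finset.mul_prod_erase Finset.univ _ (Finset.mem_univ (c i)), if_pos rfl]
    congr 1
    rw [Finset.prod_congr rfl (fun x hx => if_neg (Finset.ne_of_mem_erase hx)),
      Finset.prod_const, Finset.card_erase_of_mem (Finset.mem_univ _), Finset.card_univ,
      Fintype.card_fin]
  have houter : ∀ s : Fin r,
      (Measure.pi fun _ : Fin n => Measure.pi fun _ : Fin n => volume.restrict (Icc (0:ℝ) 1))
        (Set.pi univ fun i => Set.pi univ fun j => cycCell hr n c s i j)
      = if s = ⟨0, hr⟩ then
          (ENNReal.ofReal ((n:ℝ)⁻¹) * ENNReal.ofReal (1 - (n:ℝ)⁻¹) ^ (n - 1)) ^ n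
        else 1 := by
    intro s
    split_ifs with hs
    · subst hs
      rw [Measure.pi_pi]
      simp only [hrow]
      rw [Finset.prod_const, Finset.card_univ, Fintype.card_fin]
    · have : ∀ i j, cycCell hr n c s i j = univ := by
        intro i j; rw [cycCell, if_neg hs]
      simp only [this, Set.pi_univ]
      exact measure_univ
  simp only [houter]
  rw [Finset.prod_ite_eq' Finset.univ (⟨0, hr⟩ : Fin r) (fun _ => _)]
  simp

lemma mem_myF_iff {r n : ℕ} (hr : 0 < r) (c : Equiv.Perm (Fin n)) (ω : CycSpace r n) :
    ω ∈ myF hr c ↔ ∀ s i j, ω s i j ∈ cycCell hr n c s i j := by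
  simp [myF, Set.mem_pi]

lemma s1_val {r : ℕ} (hr3 : 3 ≤ r) :
    haveI : NeZero r := ⟨by omega⟩
    ((⟨0, by linarith⟩ : Fin r) + 1).val = 1 := by
  haveI : NeZero r := ⟨by omega⟩
  rw [Fin.add_def]
  simp only [Fin.val_one']
  have h1 : 1 % r = 1 := Nat.mod_eq_of_lt (by omega)
  rw [h1, Nat.zero_add, h1]

lemma stable_of_mem_myF {r n : ℕ} (hr3 : 3 ≤ r) (c : Equiv.Perm (Fin n))
    {ω : CycSpace r n} (hω : ω ∈ myF (show 0 < r by linarith) c) :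
    haveI : NeZero r := ⟨by omega⟩
    ∀ σ : Fin r → Equiv.Perm (Fin n), σ ⟨0, by linarith⟩ = 1 →
      σ ((⟨0, by linarith⟩ : Fin r) + 1) = c →
      cycWeaklyStable (show 0 < r by linarith) ω σ := by
  haveI : NeZero r := ⟨by omega⟩
  have hr : 0 < r := by omega
  intro σ h0 h1 a hb
  have hblock := hb ⟨0, hr⟩
  rw [h0, h1] at hblock
  simp only [inv_one, Equiv.Perm.one_apply] at hblock
  rw [mem_myF_iff] at hω
  have hmatch := hω ⟨0, hr⟩ (a ⟨0, hr⟩) (c (a ⟨0, hr⟩))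
  rw [cycCell, if_pos rfl, if_pos rfl] at hmatch
  by_cases hj : a ((⟨0, hr⟩ : Fin r) + 1) = c (a ⟨0, hr⟩)
  · rw [hj] at hblock; exact lt_irrefl _ hblock
  · have hother := hω ⟨0, hr⟩ (a ⟨0, hr⟩) (a ((⟨0, hr⟩ : Fin r) + 1))
    rw [cycCell, if_pos rfl, if_neg hj] at hother
    exact absurd hblock (not_lt.mpr (lt_trans hmatch hother).le)

lemma card_le_Scyc_of_mem_myF {r n : ℕ} (hr3 : 3 ≤ r) (c : Equiv.Perm (Fin n))
    {ω : CycSpace r n} (hω : ω ∈ myF (show 0 < r by linarith) c) :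
    n.factorial ^ (r - 2) ≤ Scyc r n (show 0 < r by linarith) ω := by
  classical
  haveI : NeZero r := ⟨by omega⟩
  have hr : 0 < r := by omega
  have hs1v : ((⟨0, hr⟩ : Fin r) + 1).val = 1 := s1_val hr3
  have hne01 : ((⟨0, hr⟩ : Fin r) + 1) ≠ ⟨0, hr⟩ := by
    intro h
    have := congrArg Fin.val h
    rw [hs1v] at this
    exact one_ne_zero this
  let ψ0 : (Fin (r - 2) → Equiv.Perm (Fin n)) → (Fin r → Equiv.Perm (Fin n)) :=
    fun τ s => if s = ⟨0, hr⟩ then 1 else if s = (⟨0, hr⟩ : Fin r) + 1 then c else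
      if h2 : 2 ≤ s.val then τ ⟨s.val - 2, by omega⟩ else 1
  have hψ0_0 : ∀ τ, ψ0 τ ⟨0, hr⟩ = 1 := fun τ => by simp [ψ0]
  have hψ0_1 : ∀ τ, ψ0 τ ((⟨0, hr⟩ : Fin r) + 1) = c := fun τ => by
    simp only [ψ0, if_neg hne01]; simp
  have hψ0_ge : ∀ τ (s : Fin r) (h2 : 2 ≤ s.val), ψ0 τ s = τ ⟨s.val - 2, by omega⟩ := by
    intro τ s h2
    have hns0 : s ≠ ⟨0, hr⟩ := by
      intro h; rw [h] at h2; exact absurd h2 (by norm_num)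
    have hns1 : s ≠ (⟨0, hr⟩ : Fin r) + 1 := by
      intro h; rw [h, hs1v] at h2; exact absurd h2 (by norm_num)
    simp only [ψ0, if_neg hns0, if_neg hns1, dif_pos h2]
  let ψ : (Fin (r - 2) → Equiv.Perm (Fin n)) →
      {σ : Fin r → Equiv.Perm (Fin n) // σ ⟨0, hr⟩ = 1 ∧ cycWeaklyStable hr ω σ} :=
    fun τ => ⟨ψ0 τ, hψ0_0 τ, stable_of_mem_myF hr3 c hω (ψ0 τ) (hψ0_0 τ) (hψ0_1 τ)⟩
  have hinj : Function.Injective ψ := by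
    intro τ τ' h
    funext i
    have hi2 : i.val + 2 < r := by have := i.isLt; omega
    have h1 := congrArg (fun σ => σ.val (⟨i.val + 2, hi2⟩ : Fin r)) h
    simp only [ψ] at h1
    rw [hψ0_ge τ _ (by norm_num), hψ0_ge τ' _ (by norm_num)] at h1
    convert h1 <;> simp
  have hcard := Nat.card_le_card_of_injective ψ hinj
  rw [Nat.card_eq_fintype_card, Nat.card_eq_fintype_card] at hcard
  calc n.factorial ^ (r - 2)
      = Fintype.card (Fin (r - 2) → Equiv.Perm (Fin n)) := by
        rw [Fintype.card_fun, Fintype.card_perm, Fintype.card_fin, Fintype.card_fin]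
    _ ≤ _ := by
        rw [Scyc, Nat.card_eq_fintype_card]
        exact hcard

lemma myF_disjoint {r n : ℕ} (hr : 0 < r) (hn : 1 ≤ n) {c c' : Equiv.Perm (Fin n)}
    {ω : CycSpace r n} (h : ω ∈ myF hr c) (h' : ω ∈ myF hr c') : c = c' := by
  rw [mem_myF_iff] at h h'
  apply Equiv.ext
  intro i
  by_contra hne
  have h1 := h ⟨0, hr⟩ i (c' i)
  rw [cycCell, if_pos rfl, if_neg (fun hh => hne (hh.symm))] at h1
  have h2 := h' ⟨0, hr⟩ i (c' i)
  rw [cycCell, if_pos rfl, if_pos rfl] at h2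
  exact absurd (lt_trans h1 (mem_Iio.mp h2)) (lt_irrefl _)

lemma measurable_eval3 {r n : ℕ} (s : Fin r) (i j : Fin n) :
    Measurable fun ω : CycSpace r n => ω s i j :=
  (measurable_pi_apply j).comp ((measurable_pi_apply i).comp (measurable_pi_apply s))

lemma measurableSet_stable {r n : ℕ} (hr : 0 < r) (σ : Fin r → Equiv.Perm (Fin n)) :
    MeasurableSet {ω : CycSpace r n | cycWeaklyStable hr ω σ} := by
  haveI : NeZero r := ⟨hr.ne'⟩
  have : {ω : CycSpace r n | cycWeaklyStable hr ω σ} =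
      ⋂ a : Fin r → Fin n, (⋂ s : Fin r,
        {ω : CycSpace r n |
          ω s (a s) (a (s + 1)) < ω s (a s) (σ (s + 1) ((σ s)⁻¹ (a s)))})ᶜ := by
    ext ω
    simp only [mem_setOf_eq, mem_iInter, mem_compl_iff, cycWeaklyStable, cycBlocks]
  rw [this]
  refine MeasurableSet.iInter fun a => (MeasurableSet.iInter fun s => ?_).compl
  exact measurableSet_lt (measurable_eval3 _ _ _) (measurable_eval3 _ _ _)

lemma measurableSet_myF {r n : ℕ} (hr : 0 < r) (c : Equiv.Perm (Fin n)) :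
    MeasurableSet (myF (r := r) (n := n) hr c) := by
  refine MeasurableSet.univ_pi fun s => MeasurableSet.univ_pi fun i =>
    MeasurableSet.univ_pi fun j => ?_
  rw [cycCell]
  split_ifs
  · exact measurableSet_Iio
  · exact measurableSet_Ioi
  · exact MeasurableSet.univ

lemma Scyc_eq_sum (r n : ℕ) (hr : 0 < r) (ω : CycSpace r n) :
    (Scyc r n hr ω : ℝ) = ∑ σ : Fin r → Equiv.Perm (Fin n),
      Set.indicator {ω' : CycSpace r n | σ ⟨0, hr⟩ = 1 ∧ cycWeaklyStable hr ω' σ}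
        (fun _ => (1:ℝ)) ω := by
  classical
  rw [Scyc, Nat.card_eq_fintype_card, Fintype.card_subtype]
  rw [Finset.card_filter]
  push_cast
  refine Finset.sum_congr rfl fun σ _ => ?_
  rw [Set.indicator_apply]
  by_cases h : σ ⟨0, hr⟩ = 1 ∧ cycWeaklyStable hr ω σ <;> simp [h]

lemma integrable_Scyc (r n : ℕ) (hr : 0 < r) :
    Integrable (fun ω => (Scyc r n hr ω : ℝ)) (cycMeasure r n) := by
  classical
  have heq : (fun ω => (Scyc r n hr ω : ℝ)) = fun ω =>
      ∑ σ : Fin r → Equiv.Perm (Fin n),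
        Set.indicator {ω' : CycSpace r n | σ ⟨0, hr⟩ = 1 ∧ cycWeaklyStable hr ω' σ}
          (fun _ => (1:ℝ)) ω := by
    funext ω; exact Scyc_eq_sum r n hr ω
  rw [heq]
  refine integrable_finset_sum _ fun σ _ => ?_
  have hms : MeasurableSet {ω' : CycSpace r n | σ ⟨0, hr⟩ = 1 ∧ cycWeaklyStable hr ω' σ} := by
    by_cases h : σ ⟨0, hr⟩ = 1
    · have : {ω' : CycSpace r n | σ ⟨0, hr⟩ = 1 ∧ cycWeaklyStable hr ω' σ}
          = {ω' : CycSpace r n | cycWeaklyStable hr ω' σ} := by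
        ext ω'; simp [h]
      rw [this]; exact measurableSet_stable hr σ
    · have : {ω' : CycSpace r n | σ ⟨0, hr⟩ = 1 ∧ cycWeaklyStable hr ω' σ} = ∅ := by
        ext ω'; simp [h]
      rw [this]; exact MeasurableSet.empty
  exact (integrable_const (1:ℝ)).indicator hms

lemma EScyc_ge_base (r n : ℕ) (hr3 : 3 ≤ r) (hn : 1 ≤ n) (hr : 0 < r) :
    ((n.factorial : ℝ)) ^ (r - 1) * ((n:ℝ)⁻¹ * (1 - (n:ℝ)⁻¹) ^ (n - 1)) ^ n
      ≤ EScyc r n hr := by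
  classical
  set q : ℝ := ((n:ℝ)⁻¹ * (1 - (n:ℝ)⁻¹) ^ (n - 1)) ^ n with hq
  have hq0 : 0 ≤ (n:ℝ)⁻¹ := by positivity
  have hq1 : 0 ≤ 1 - (n:ℝ)⁻¹ := by
    have : (n:ℝ)⁻¹ ≤ 1 := by
      rw [inv_le_one_iff₀]; right; exact_mod_cast hn
    linarith
  set g : CycSpace r n → ℝ := fun ω => ∑ c : Equiv.Perm (Fin n),
    ((n.factorial ^ (r - 2) : ℕ) : ℝ) * Set.indicator (myF hr c) (fun _ => (1:ℝ)) ω with hg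
  have hgint : Integrable g (cycMeasure r n) := by
    refine integrable_finset_sum _ fun c _ => ?_
    exact ((integrable_const (1:ℝ)).indicator (measurableSet_myF hr c)).const_mul _
  have hle : ∀ ω, g ω ≤ (Scyc r n hr ω : ℝ) := by
    intro ω
    by_cases h : ∃ c, ω ∈ myF hr c
    · obtain ⟨c, hc⟩ := h
      simp only [hg]
      rw [Finset.sum_eq_single c
        (fun c' _ hne => by
          rw [Set.indicator_of_notMem, mul_zero]
          intro hmem
          exact hne (myF_disjoint hr hn hmem hc))
        (fun hmem => absurd (Finset.mem_univ c) hmem)]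
      rw [Set.indicator_of_mem hc, mul_one]
      exact_mod_cast card_le_Scyc_of_mem_myF hr3 c hc
    · push_neg at h
      have : g ω = 0 := by
        simp only [hg]
        refine Finset.sum_eq_zero fun c _ => ?_
        rw [Set.indicator_of_notMem (h c), mul_zero]
      rw [this]
      exact_mod_cast Nat.zero_le _
  have hint : ∫ ω, g ω ∂ cycMeasure r n ≤ EScyc r n hr := by
    refine integral_mono hgint (integrable_Scyc r n hr) hle
  refine le_trans (le_of_eq ?_) hint
  simp only [hg]
  rw [integral_finset_sum _ (fun c _ =>
    ((integrable_const (1:ℝ)).indicator (measurableSet_myF hr c)).const_mul _)]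
  have hterm : ∀ c : Equiv.Perm (Fin n),
      ∫ ω, ((n.factorial ^ (r - 2) : ℕ) : ℝ) *
        Set.indicator (myF hr c) (fun _ => (1:ℝ)) ω ∂ cycMeasure r n
      = ((n.factorial ^ (r - 2) : ℕ) : ℝ) * q := by
    intro c
    rw [integral_const_mul, integral_indicator_const _ (measurableSet_myF hr c)]
    congr 1
    rw [measureReal_def, measure_myF hr hn c, smul_eq_mul, mul_one]
    rw [ENNReal.toReal_pow, ENNReal.toReal_mul, ENNReal.toReal_pow,
      ENNReal.toReal_ofReal hq0, ENNReal.toReal_ofReal hq1]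
  simp only [hterm]
  rw [Finset.sum_const, Finset.card_univ, Fintype.card_perm, Fintype.card_fin,
    nsmul_eq_mul]
  rw [← mul_assoc]
  congr 1
  push_cast
  rw [← pow_succ']
  congr 1
  omega

lemma pow_self_le_exp_mul_factorial : ∀ n : ℕ, (n:ℝ)^n ≤ Real.exp n * n.factorial := by
  intro n
  induction n with
  | zero => simp
  | succ m ih =>
    have hfac0 : (0:ℝ) < m.factorial := by exact_mod_cast m.factorial_pos
    have h1 : ((m:ℝ)+1)^m ≤ Real.exp 1 * (m:ℝ)^m := by
      rcases Nat.eq_zero_or_pos m with hm | hm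
      · subst hm; simp
      · have hm0 : (0:ℝ) < m := by exact_mod_cast hm
        have hsplit : ((m:ℝ)+1) = m * (1 + 1/m) := by field_simp
        rw [hsplit, mul_pow]
        have h2 : (1 + 1/(m:ℝ))^m ≤ Real.exp (1/m) ^ m := by
          apply pow_le_pow_left₀ (by positivity)
          have := Real.add_one_le_exp (1/(m:ℝ))
          linarith
        have h3 : Real.exp (1/(m:ℝ)) ^ m = Real.exp 1 := by
          rw [← Real.exp_nat_mul]
          congr 1
          field_simp
        rw [h3] at h2
        calc (m:ℝ)^m * (1 + 1/(m:ℝ))^m ≤ (m:ℝ)^m * Real.exp 1 :=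
              mul_le_mul_of_nonneg_left h2 (by positivity)
          _ = Real.exp 1 * (m:ℝ)^m := by ring
    have hm1 : (0:ℝ) ≤ (m:ℝ) + 1 := by positivity
    calc ((m+1 : ℕ):ℝ)^(m+1) = ((m:ℝ)+1)^m * ((m:ℝ)+1) := by push_cast; ring
      _ ≤ (Real.exp 1 * (m:ℝ)^m) * ((m:ℝ)+1) := mul_le_mul_of_nonneg_right h1 hm1
      _ ≤ (Real.exp 1 * (Real.exp m * m.factorial)) * ((m:ℝ)+1) := by
          have := mul_le_mul_of_nonneg_left ih (Real.exp_pos 1).le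
          exact mul_le_mul_of_nonneg_right this hm1
      _ = Real.exp ((m:ℝ)+1) * (((m:ℝ)+1) * m.factorial) := by
          rw [Real.exp_add]; ring
      _ = Real.exp ((m+1:ℕ):ℝ) * ((m+1:ℕ).factorial : ℝ) := by
          rw [Nat.factorial_succ]; push_cast; ring

lemma one_sub_inv_pow_ge (n : ℕ) (hn : 2 ≤ n) :
    Real.exp (-2) ≤ (1 - (n:ℝ)⁻¹) ^ (n - 1) := by
  have ha : (2:ℝ) ≤ n := by exact_mod_cast hn
  have ha0 : (0:ℝ) < n := by linarith
  have hu0 : (0:ℝ) < (n:ℝ)⁻¹ := by positivity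
  have hu2 : (n:ℝ)⁻¹ ≤ 1/2 := by
    rw [inv_le_comm₀ ha0 (by norm_num)] ; norm_num; linarith
  have hpos : (0:ℝ) < 1 + 2 * (n:ℝ)⁻¹ := by positivity
  have step1 : Real.exp (-(2 * (n:ℝ)⁻¹)) ≤ 1 - (n:ℝ)⁻¹ := by
    have e1 : 1 + 2 * (n:ℝ)⁻¹ ≤ Real.exp (2 * (n:ℝ)⁻¹) := by
      have := Real.add_one_le_exp (2 * (n:ℝ)⁻¹)
      linarith
    have e2 : Real.exp (-(2 * (n:ℝ)⁻¹)) ≤ (1 + 2 * (n:ℝ)⁻¹)⁻¹ := by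
      rw [Real.exp_neg]
      exact inv_anti₀ hpos e1
    refine le_trans e2 ?_
    rw [inv_eq_one_div, div_le_iff₀ hpos]
    nlinarith [hu0.le, hu2]
  have step2 : (Real.exp (-(2 * (n:ℝ)⁻¹)))^(n-1) ≤ (1 - (n:ℝ)⁻¹)^(n-1) :=
    pow_le_pow_left₀ (Real.exp_pos _).le step1 _
  refine le_trans ?_ step2
  rw [← Real.exp_nat_mul]
  apply Real.exp_le_exp.mpr
  have hn1 : ((n-1:ℕ):ℝ) = (n:ℝ) - 1 := by
    rw [Nat.cast_sub (by omega)]; norm_num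
  rw [hn1]
  have key : ((n:ℝ) - 1) * (2 * (n:ℝ)⁻¹) ≤ 2 := by
    have hinv : (n:ℝ) * (n:ℝ)⁻¹ = 1 := mul_inv_cancel₀ (ne_of_gt ha0)
    nlinarith [hu0.le]
  nlinarith [key]

lemma cConst_le_one (r : ℕ) : cConst r ≤ 1 := by
  rw [cConst]
  have hsub : {y : Fin (r - 1) → ℝ |
      (∀ i, y i ∈ Icc (0:ℝ) 1) ∧ (∑ i, y i) ∈ Icc (1:ℝ) 2} ⊆
      Set.pi univ fun _ : Fin (r-1) => Icc (0:ℝ) 1 := by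
    intro y hy
    rw [Set.mem_pi]
    intro i _
    exact hy.1 i
  have hU : volume (Set.pi univ fun _ : Fin (r-1) => Icc (0:ℝ) 1) = 1 := by
    rw [volume_pi_pi]
    simp [Real.volume_Icc]
  calc (volume {y : Fin (r - 1) → ℝ |
      (∀ i, y i ∈ Icc (0:ℝ) 1) ∧ (∑ i, y i) ∈ Icc (1:ℝ) 2}).toReal
      ≤ (volume (Set.pi univ fun _ : Fin (r-1) => Icc (0:ℝ) 1)).toReal := by
        apply ENNReal.toReal_mono
        · rw [hU]; exact ENNReal.one_ne_top
        · exact measure_mono hsub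
    _ = 1 := by rw [hU]; simp

lemma tail_bound (r : ℕ) (hr3 : 3 ≤ r) : ∃ N : ℕ, ∀ n : ℕ, N ≤ n →
    ((n:ℝ) * Real.log n / 2) ^ (r - 1) ≤
      (n.factorial : ℝ) ^ (r - 1) * ((n:ℝ)⁻¹ * (1 - (n:ℝ)⁻¹) ^ (n - 1)) ^ n := by
  refine ⟨⌈Real.exp (2*((r:ℝ)+1))⌉₊ + 4*r + 3, fun n hn => ?_⟩
  have hn3 : 3 ≤ n := by omega
  have hn4r : 4 * r ≤ n := by omega
  have hceil : (⌈Real.exp (2*((r:ℝ)+1))⌉₊ : ℝ) ≤ n := by exact_mod_cast (by omega : ⌈Real.exp (2*((r:ℝ)+1))⌉₊ ≤ n)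
  have hnpos : (0:ℝ) < n := by exact_mod_cast (by omega : 0 < n)
  set t : ℝ := Real.log n with ht
  set ρ : ℝ := (r:ℝ) with hρ
  have hρ3 : (3:ℝ) ≤ ρ := by rw [hρ]; exact_mod_cast hr3
  have htlarge : 2*(ρ+1) ≤ t := by
    rw [ht, Real.le_log_iff_exp_le hnpos]
    calc Real.exp (2*(ρ+1)) ≤ (⌈Real.exp (2*((r:ℝ)+1))⌉₊ : ℝ) := Nat.le_ceil _
      _ ≤ n := hceil
  have ht0 : 0 ≤ t := le_trans (by linarith) htlarge
  have hexpt : Real.exp t = n := Real.exp_log hnpos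
  -- LHS bound
  have hLHS : ((n:ℝ) * t / 2) ^ (r - 1) ≤ Real.exp ((2*(ρ-1)) * t) := by
    have hb1 : (n:ℝ) * t / 2 ≤ (n:ℝ)^2 := by
      have hlog : t ≤ (n:ℝ) := by
        rw [ht]
        have := Real.log_le_sub_one_of_pos hnpos
        linarith
      nlinarith [hnpos.le, ht0]
    have hb0 : 0 ≤ (n:ℝ) * t / 2 := by positivity
    calc ((n:ℝ) * t / 2) ^ (r - 1) ≤ ((n:ℝ)^2) ^ (r-1) := pow_le_pow_left₀ hb0 hb1 _
      _ = (n:ℝ) ^ (2 * (r-1)) := by rw [pow_mul]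
      _ = Real.exp ((2*(r-1) : ℕ) * t) := by rw [← hexpt, ← Real.exp_nat_mul]
      _ = Real.exp ((2*(ρ-1)) * t) := by
          congr 1
          push_cast [Nat.cast_sub (by omega : 1 ≤ r)]
          ring
  -- RHS bound
  have hfac : Real.exp ((n:ℝ) * t - n) ≤ (n.factorial : ℝ) := by
    have h1 := pow_self_le_exp_mul_factorial n
    have h2 : Real.exp ((n:ℝ) * t) = (n:ℝ)^n := by
      rw [Real.exp_nat_mul, hexpt]
    rw [Real.exp_sub, div_le_iff₀ (Real.exp_pos _), h2]
    linarith [h1]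
  have hq : Real.exp ((n:ℝ) * (-t - 2)) ≤ ((n:ℝ)⁻¹ * (1 - (n:ℝ)⁻¹) ^ (n - 1)) ^ n := by
    have hinner : Real.exp (-t - 2) ≤ (n:ℝ)⁻¹ * (1 - (n:ℝ)⁻¹) ^ (n - 1) := by
      have h1 : Real.exp (-t) = (n:ℝ)⁻¹ := by rw [Real.exp_neg, hexpt]
      calc Real.exp (-t - 2) = Real.exp (-t) * Real.exp (-2) := by rw [← Real.exp_add]; ring_nf
        _ ≤ (n:ℝ)⁻¹ * (1 - (n:ℝ)⁻¹) ^ (n - 1) := by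
            rw [h1]
            exact mul_le_mul_of_nonneg_left (one_sub_inv_pow_ge n (by omega)) (by positivity)
    calc Real.exp ((n:ℝ) * (-t - 2)) = Real.exp (-t - 2) ^ n := Real.exp_nat_mul _ n
      _ ≤ ((n:ℝ)⁻¹ * (1 - (n:ℝ)⁻¹) ^ (n - 1)) ^ n :=
          pow_le_pow_left₀ (Real.exp_pos _).le hinner n
  have hfacpow : Real.exp ((ρ-1) * ((n:ℝ) * t - n)) ≤ (n.factorial : ℝ) ^ (r - 1) := by
    calc Real.exp ((ρ-1) * ((n:ℝ) * t - n))
        = Real.exp (((r-1:ℕ):ℝ) * ((n:ℝ) * t - n)) := by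
          congr 2
          push_cast [Nat.cast_sub (by omega : 1 ≤ r)]
          ring
      _ = Real.exp ((n:ℝ) * t - n) ^ (r-1) := Real.exp_nat_mul _ _
      _ ≤ (n.factorial : ℝ) ^ (r - 1) := pow_le_pow_left₀ (Real.exp_pos _).le hfac _
  -- combine
  have hcomb : Real.exp ((2*(ρ-1)) * t) ≤
      Real.exp ((ρ-1) * ((n:ℝ) * t - n)) * Real.exp ((n:ℝ) * (-t - 2)) := by
    rw [← Real.exp_add]
    apply Real.exp_le_exp.mpr
    have hA : 0 ≤ (n:ℝ) * (t - 2*(ρ+1)) := mul_nonneg hnpos.le (by linarith)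
    have hB : 0 ≤ t * ((n:ℝ) - 4*ρ) := by
      apply mul_nonneg ht0
      have : (4*r : ℝ) ≤ n := by exact_mod_cast hn4r
      linarith
    have hC : 0 ≤ (n:ℝ) * t * (ρ - 3) := by
      apply mul_nonneg (mul_nonneg hnpos.le ht0); linarith
    nlinarith [hA, hB, hC, ht0]
  have hrhs0 : 0 ≤ Real.exp ((n:ℝ) * (-t - 2)) := (Real.exp_pos _).le
  calc ((n:ℝ) * t / 2) ^ (r - 1) ≤ Real.exp ((2*(ρ-1)) * t) := hLHS
    _ ≤ Real.exp ((ρ-1) * ((n:ℝ) * t - n)) * Real.exp ((n:ℝ) * (-t - 2)) := hcomb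
    _ ≤ (n.factorial : ℝ) ^ (r - 1) * ((n:ℝ)⁻¹ * (1 - (n:ℝ)⁻¹) ^ (n - 1)) ^ n := by
        apply mul_le_mul hfacpow hq hrhs0
        positivity

/-- For every `r ≥ 3` and `ε > 0`, for all large `n`,
`E[S_{n,r}] ≥ (c_r − ε)·((n·log n)/2)^{r−1}`. -/
theorem expected_cyclic_weakly_stable_lower_bound (r : ℕ) (hr : 3 ≤ r)
    (ε : ℝ) (hε : 0 < ε) :
    ∃ N : ℕ, ∀ n : ℕ, N ≤ n →
      (cConst r - ε) * (((n : ℝ) * Real.log n) / 2) ^ (r - 1) ≤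
        EScyc r n (by omega) := by
  obtain ⟨N, hN⟩ := tail_bound r hr
  refine ⟨N + 3, fun n hn => ?_⟩
  have hn1 : 1 ≤ n := by omega
  have hB0 : 0 ≤ ((n:ℝ) * Real.log n / 2) ^ (r - 1) := by
    have hlog : 0 ≤ Real.log n := Real.log_nonneg (by exact_mod_cast hn1)
    have : (0:ℝ) ≤ (n:ℝ) * Real.log n / 2 := by positivity
    positivity
  have h1 : (cConst r - ε) * ((n:ℝ) * Real.log n / 2) ^ (r - 1) ≤
      ((n:ℝ) * Real.log n / 2) ^ (r - 1) := by
    apply mul_le_of_le_one_left hB0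
    linarith [cConst_le_one r, hε]
  refine le_trans h1 (le_trans (hN n (by omega)) ?_)
  exact EScyc_ge_base r n hr hn1 (by omega)
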